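/- Let s ≥ 1, c₁,…,c_s ∈ [0,1], and L₀, G > 0. Then there exists a constant C > 0, depending only on s, L₀ and G, such that: for every h ∈ (0,1], every pair of continuous functions L, g : [0,h] → ℝ with |L(t)| ≤ L₀ and |g(t)| ≤ G on [0,h], and every twice continuously differentiable R : [0,h] → ℝ with R(0) = R'(0) = 0 and R''(t) = L(t)·R(t) + g(t)·∏_{i=1}^s (t − c_i h) for all t ∈ [0,h], one has |R(t)| ≤ C·h^{s+2} and |R'(t)| ≤ C·h^{s+1} for all t ∈ [0,h]. -/

import Mathlib

open BigOperators

theorem stmt_10 (s : ℕ) (hs : 1 ≤ s) (L₀ G : ℝ) (hL₀ : 0 < L₀) (hG : 0 < G) :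
    ∃ C > 0, ∀ c : Fin s → ℝ, (∀ i, c i ∈ Set.Icc (0 : ℝ) 1) →
      ∀ h ∈ Set.Ioc (0 : ℝ) 1, ∀ L g R R' : ℝ → ℝ,
        ContinuousOn L (Set.Icc 0 h) → ContinuousOn g (Set.Icc 0 h) →
        (∀ t ∈ Set.Icc (0 : ℝ) h, |L t| ≤ L₀) →
        (∀ t ∈ Set.Icc (0 : ℝ) h, |g t| ≤ G) →
        R 0 = 0 → R' 0 = 0 →
        (∀ t ∈ Set.Icc (0 : ℝ) h, HasDerivAt R (R' t) t) →
        (∀ t ∈ Set.Icc (0 : ℝ) h,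
          HasDerivAt R' (L t * R t + g t * ∏ i, (t - c i * h)) t) →
        ∀ t ∈ Set.Icc (0 : ℝ) h,
          |R t| ≤ C * h ^ (s + 2) ∧ |R' t| ≤ C * h ^ (s + 1) := by
  set K : ℝ := L₀ + 1 with hKdef
  have hK : 0 < K := by linarith
  refine ⟨G * Real.exp K, by positivity, ?_⟩
  intro c hc h hh L g R R' hLc hgc hLb hgb hR0 hR'0 hR hR' t ht
  obtain ⟨hh0, hh1⟩ := hh
  set C : ℝ := G * Real.exp K with hCdef
  -- bound on the product
  have hprod : ∀ u ∈ Set.Icc (0:ℝ) h, |∏ i, (u - c i * h)| ≤ h ^ s := by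
    intro u hu
    rw [Finset.abs_prod]
    calc ∏ i, |u - c i * h| ≤ ∏ _i : Fin s, h := by
          apply Finset.prod_le_prod (fun i _ => abs_nonneg _)
          intro i _
          have h1 := (hc i).1
          have h2 := (hc i).2
          have hc1 : 0 ≤ c i * h := by positivity
          have hc2 : c i * h ≤ h := by nlinarith
          rw [abs_le]
          constructor <;> [nlinarith [hu.1, hu.2]; nlinarith [hu.1, hu.2]]
      _ = h ^ s := by simp
  set ε : ℝ := G * h ^ s with hεdef
  have hε : 0 ≤ ε := by positivity
  -- the pair function
  set F : ℝ → ℝ × ℝ := fun u => (R u, R' u) with hF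
  set F' : ℝ → ℝ × ℝ := fun u => (R' u, L u * R u + g u * ∏ i, (u - c i * h)) with hF'
  have hFc : ContinuousOn F (Set.Icc 0 h) := by
    apply ContinuousOn.prodMk
    · exact fun u hu => (hR u hu).continuousAt.continuousWithinAt
    · exact fun u hu => (hR' u hu).continuousAt.continuousWithinAt
  have hFd : ∀ u ∈ Set.Ico (0:ℝ) h, HasDerivWithinAt F (F' u) (Set.Ici u) u := by
    intro u hu
    have hu' : u ∈ Set.Icc (0:ℝ) h := ⟨hu.1, hu.2.le⟩
    exact ((hR u hu').prodMk (hR' u hu')).hasDerivWithinAt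
  have hF0 : ‖F 0‖ ≤ 0 := by
    simp [hF, hR0, hR'0, Prod.norm_def]
  have hbound : ∀ u ∈ Set.Ico (0:ℝ) h, ‖F' u‖ ≤ K * ‖F u‖ + ε := by
    intro u hu
    have hu' : u ∈ Set.Icc (0:ℝ) h := ⟨hu.1, hu.2.le⟩
    have h1 : |R u| ≤ ‖F u‖ := by
      simpa [hF, Real.norm_eq_abs] using norm_fst_le (F u)
    have h2 : |R' u| ≤ ‖F u‖ := by
      simpa [hF, Real.norm_eq_abs] using norm_snd_le (F u)
    have hFnn : 0 ≤ ‖F u‖ := norm_nonneg _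
    rw [Prod.norm_def]
    apply max_le
    · simp only [Real.norm_eq_abs]
      nlinarith
    · simp only [Real.norm_eq_abs]
      calc |L u * R u + g u * ∏ i, (u - c i * h)|
          ≤ |L u * R u| + |g u * ∏ i, (u - c i * h)| := abs_add_le _ _
        _ = |L u| * |R u| + |g u| * |∏ i, (u - c i * h)| := by rw [abs_mul, abs_mul]
        _ ≤ L₀ * ‖F u‖ + G * h ^ s := by
            apply add_le_add
            · exact mul_le_mul (hLb u hu') h1 (abs_nonneg _) hL₀.le
            · exact mul_le_mul (hgb u hu') (hprod u hu') (abs_nonneg _) hG.le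
        _ ≤ K * ‖F u‖ + ε := by
            rw [hεdef]
            nlinarith
  have hgron := norm_le_gronwallBound_of_norm_deriv_right_le hFc hFd hF0 hbound
  -- bound the gronwall bound
  have hGB : ∀ x ∈ Set.Icc (0:ℝ) h, gronwallBound 0 K ε (x - 0) ≤ C * h ^ (s + 1) := by
    intro x hx
    rw [sub_zero, gronwallBound_of_K_ne_0 hK.ne']
    simp only [zero_mul, zero_add]
    have hx0 : 0 ≤ x := hx.1
    have hxh : x ≤ h := hx.2
    have hKx : 0 ≤ K * x := by positivity
    have hexp1 : Real.exp (K * x) - 1 ≤ (K * x) * Real.exp (K * x) := by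
      have hneg := Real.add_one_le_exp (-(K * x))
      rw [Real.exp_neg] at hneg
      have hpos : (0:ℝ) < Real.exp (K * x) := Real.exp_pos _
      have h3 := mul_le_mul_of_nonneg_left hneg hpos.le
      rw [mul_inv_cancel₀ hpos.ne'] at h3
      nlinarith
    have hexp2 : Real.exp (K * x) ≤ Real.exp K := by
      apply Real.exp_le_exp.2
      nlinarith
    calc ε / K * (Real.exp (K * x) - 1)
        ≤ ε / K * ((K * x) * Real.exp (K * x)) := by
          apply mul_le_mul_of_nonneg_left hexp1 (by positivity)
      _ = ε * x * Real.exp (K * x) := by field_simp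
      _ ≤ ε * h * Real.exp K := by
          apply mul_le_mul (by nlinarith) hexp2 (Real.exp_pos _).le (by positivity)
      _ = C * h ^ (s + 1) := by rw [hεdef, hCdef, pow_succ]; ring
  have hFb : ∀ x ∈ Set.Icc (0:ℝ) h, ‖F x‖ ≤ C * h ^ (s + 1) :=
    fun x hx => (hgron x hx).trans (hGB x hx)
  have hR'b : ∀ x ∈ Set.Icc (0:ℝ) h, |R' x| ≤ C * h ^ (s + 1) := by
    intro x hx
    refine le_trans ?_ (hFb x hx)
    simpa [hF, Real.norm_eq_abs] using norm_snd_le (F x)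
  refine ⟨?_, hR'b t ht⟩
  -- integrate once more for R
  have hRd : ∀ x ∈ Set.Icc (0:ℝ) h, HasDerivWithinAt R (R' x) (Set.Icc 0 h) x :=
    fun x hx => (hR x hx).hasDerivWithinAt
  have := norm_image_sub_le_of_norm_deriv_le_segment' hRd
    (fun x hx => by simpa [Real.norm_eq_abs] using hR'b x ⟨hx.1, hx.2.le⟩) t ht
  rw [hR0, sub_zero, Real.norm_eq_abs, sub_zero] at this
  calc |R t| ≤ C * h ^ (s + 1) * t := this
    _ ≤ C * h ^ (s + 2) := by
        have : C * h ^ (s + 1) * t ≤ C * h ^ (s + 1) * h := by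
          apply mul_le_mul_of_nonneg_left ht.2 (by positivity)
        calc C * h ^ (s + 1) * t ≤ C * h ^ (s + 1) * h := this
          _ = C * h ^ (s + 2) := by ring
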